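/- Define, for each j ∈ ℤ, D_{j+1/2} := (F(ρ^{½,−}_{j+1/2}, ρ^{½,+}_{j+1/2}, A^{½}_{j+3/2}) − F(ρ^{½,−}_{j+1/2}, ρ^{½,+}_{j+1/2}, A^{½}_{j+1/2})) − (F(ρ^{½,−}_{j−1/2}, ρ^{½,+}_{j−1/2}, A^{½}_{j+1/2}) − F(ρ^{½,−}_{j−1/2}, ρ^{½,+}_{j−1/2}, A^{½}_{j−1/2})). Assume hypothesis (H2), that all second-order partial derivatives of f are bounded, that Δx ≤ 1, that sup_{k∈ℤ} ρ_k < ∞, and that Σ_{j∈ℤ} |ρ_{j+1} − ρ_j| < ∞. Then there exist constants K₇, K₈ ≥ 0, depending only on f, μ, λ, θ, the mass m and sup_{k∈ℤ} ρ_k (but not on Δx, Δt or on the particular sequence), such that λ·Σ_{j∈ℤ} |D_{j+1/2}| ≤ Δt·K₇ + Δt·K₈·Σ_{j∈ℤ} |ρ_{j+1} − ρ_j|. -/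

import Mathlib

open MeasureTheory

noncomputable section

/-- minmod limiter of three arguments. -/
def minmod3 (a b c : ℝ) : ℝ :=
  if 0 < a ∧ 0 < b ∧ 0 < c then min a (min b c)
  else if a < 0 ∧ b < 0 ∧ c < 0 then max a (max b c)
  else 0

/-- MUSCL slopes `σ_j = 2θ·minmod(ρ_j − ρ_{j−1}, (ρ_{j+1} − ρ_{j−1})/2, ρ_{j+1} − ρ_j)`. -/
def slp (θ : ℝ) (ρ : ℤ → ℝ) (j : ℤ) : ℝ :=
  2 * θ * minmod3 (ρ j - ρ (j - 1)) ((ρ (j + 1) - ρ (j - 1)) / 2) (ρ (j + 1) - ρ j)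

/-- left interface value `ρ⁻_{j+1/2} = ρ_j + σ_j/2`. -/
def intL (θ : ℝ) (ρ : ℤ → ℝ) (j : ℤ) : ℝ := ρ j + slp θ ρ j / 2

/-- right interface value `ρ⁺_{j−1/2} = ρ_j − σ_j/2`. -/
def intR (θ : ℝ) (ρ : ℤ → ℝ) (j : ℤ) : ℝ := ρ j - slp θ ρ j / 2

/-- discrete convolution `A_j = Δx·Σ_l μ((j−l)Δx)·ρ_l`. -/
def Adisc (μ : ℝ → ℝ) (Δx : ℝ) (ρ : ℤ → ℝ) (j : ℤ) : ℝ :=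
  Δx * ∑' l : ℤ, μ (((j : ℝ) - (l : ℝ)) * Δx) * ρ l

/-- `s_j = θ·(A_{j+1} − A_{j−1})`. -/
def sdisc (μ : ℝ → ℝ) (θ Δx : ℝ) (ρ : ℤ → ℝ) (j : ℤ) : ℝ :=
  θ * (Adisc μ Δx ρ (j + 1) - Adisc μ Δx ρ (j - 1))

/-- `A⁻_{j+1/2} = A_j + s_j/2`. -/
def AdiscL (μ : ℝ → ℝ) (θ Δx : ℝ) (ρ : ℤ → ℝ) (j : ℤ) : ℝ :=
  Adisc μ Δx ρ j + sdisc μ θ Δx ρ j / 2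

/-- `A⁺_{j−1/2} = A_j − s_j/2`. -/
def AdiscR (μ : ℝ → ℝ) (θ Δx : ℝ) (ρ : ℤ → ℝ) (j : ℤ) : ℝ :=
  Adisc μ Δx ρ j - sdisc μ θ Δx ρ j / 2

/-- mid-time value `ρ^{½,−}_{j+1/2}`. -/
def midL (f : ℝ → ℝ → ℝ) (μ : ℝ → ℝ) (θ lam Δx : ℝ) (ρ : ℤ → ℝ) (j : ℤ) : ℝ :=
  intL θ ρ j - lam / 2 *
    (f (intL θ ρ j) (AdiscL μ θ Δx ρ j) - f (intR θ ρ j) (AdiscR μ θ Δx ρ j))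

/-- mid-time value `ρ^{½,+}_{j−1/2}`. -/
def midR (f : ℝ → ℝ → ℝ) (μ : ℝ → ℝ) (θ lam Δx : ℝ) (ρ : ℤ → ℝ) (j : ℤ) : ℝ :=
  intR θ ρ j - lam / 2 *
    (f (intL θ ρ j) (AdiscL μ θ Δx ρ j) - f (intR θ ρ j) (AdiscR μ θ Δx ρ j))

/-- mid-time convolution `A^{½}_{j+1/2}`. -/
def Amid (f : ℝ → ℝ → ℝ) (μ : ℝ → ℝ) (θ lam Δx : ℝ) (ρ : ℤ → ℝ) (j : ℤ) : ℝ :=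
  Δx / 2 * ∑' l : ℤ,
    (μ (((j : ℝ) + 1 - (l : ℝ)) * Δx) * midR f μ θ lam Δx ρ l +
     μ (((j : ℝ) - (l : ℝ)) * Δx) * midL f μ θ lam Δx ρ l)

/-- Lax–Friedrichs type numerical flux `F(u,v,A)`. -/
def numFlux (f : ℝ → ℝ → ℝ) (α lam u v A : ℝ) : ℝ :=
  (f u A + f v A) / 2 - α * (v - u) / (2 * lam)

/-- MUSCL–Hancock update `ρ'_j`. -/
def mhUpdate (f : ℝ → ℝ → ℝ) (μ : ℝ → ℝ) (θ α lam Δx : ℝ) (ρ : ℤ → ℝ) (j : ℤ) : ℝ :=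
  ρ j - lam *
    (numFlux f α lam (midL f μ θ lam Δx ρ j) (midR f μ θ lam Δx ρ (j + 1))
        (Amid f μ θ lam Δx ρ j) -
     numFlux f α lam (midL f μ θ lam Δx ρ (j - 1)) (midR f μ θ lam Δx ρ j)
        (Amid f μ θ lam Δx ρ (j - 1)))

/-- the corrector flux-difference term `D_{j+1/2}`. -/
def Dterm (f : ℝ → ℝ → ℝ) (μ : ℝ → ℝ) (θ α lam Δx : ℝ) (ρ : ℤ → ℝ) (j : ℤ) : ℝ :=
  (numFlux f α lam (midL f μ θ lam Δx ρ j) (midR f μ θ lam Δx ρ (j + 1))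
      (Amid f μ θ lam Δx ρ (j + 1)) -
    numFlux f α lam (midL f μ θ lam Δx ρ j) (midR f μ θ lam Δx ρ (j + 1))
      (Amid f μ θ lam Δx ρ j)) -
  (numFlux f α lam (midL f μ θ lam Δx ρ (j - 1)) (midR f μ θ lam Δx ρ j)
      (Amid f μ θ lam Δx ρ j) -
    numFlux f α lam (midL f μ θ lam Δx ρ (j - 1)) (midR f μ θ lam Δx ρ j)
      (Amid f μ θ lam Δx ρ (j - 1)))

theorem abs_minmod3_le₁ (a b c : ℝ) : |minmod3 a b c| ≤ |a| := by
  unfold minmod3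
  split_ifs with h1 h2
  · obtain ⟨ha, hb, hc⟩ := h1
    rw [abs_of_pos (lt_min ha (lt_min hb hc)), abs_of_pos ha]
    exact min_le_left _ _
  · obtain ⟨ha, hb, hc⟩ := h2
    rw [abs_of_neg (max_lt ha (max_lt hb hc)), abs_of_neg ha]
    simp [le_max_left]
  · simp [abs_nonneg]

theorem abs_minmod3_le₃ (a b c : ℝ) : |minmod3 a b c| ≤ |c| := by
  unfold minmod3
  split_ifs with h1 h2
  · obtain ⟨ha, hb, hc⟩ := h1
    rw [abs_of_pos (lt_min ha (lt_min hb hc)), abs_of_pos hc]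
    exact le_trans (min_le_right _ _) (min_le_right _ _)
  · obtain ⟨ha, hb, hc⟩ := h2
    rw [abs_of_neg (max_lt ha (max_lt hb hc)), abs_of_neg hc]
    have := le_max_right b c
    have := le_max_right a (max b c)
    linarith
  · simp [abs_nonneg]

theorem slp_le_left {θ : ℝ} (hθ : 0 ≤ θ) (ρ : ℤ → ℝ) (j : ℤ) :
    |slp θ ρ j| ≤ 2 * θ * |ρ j - ρ (j - 1)| := by
  unfold slp
  rw [abs_mul, abs_of_nonneg (by linarith : (0:ℝ) ≤ 2 * θ)]
  exact mul_le_mul_of_nonneg_left (abs_minmod3_le₁ _ _ _) (by linarith)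

theorem slp_le_right {θ : ℝ} (hθ : 0 ≤ θ) (ρ : ℤ → ℝ) (j : ℤ) :
    |slp θ ρ j| ≤ 2 * θ * |ρ (j + 1) - ρ j| := by
  unfold slp
  rw [abs_mul, abs_of_nonneg (by linarith : (0:ℝ) ≤ 2 * θ)]
  exact mul_le_mul_of_nonneg_left (abs_minmod3_le₃ _ _ _) (by linarith)

theorem sum_of_le {ι : Type*} {g h : ι → ℝ} (hh : Summable h) (hle : ∀ j, |g j| ≤ h j) :
    Summable g :=
  summable_abs_iff.mp (Summable.of_nonneg_of_le (fun _ => abs_nonneg _) hle hh)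

theorem sum_abs_of_le {ι : Type*} {g h : ι → ℝ} (hh : Summable h) (hle : ∀ j, |g j| ≤ h j) :
    Summable (fun j => |g j|) :=
  Summable.of_nonneg_of_le (fun _ => abs_nonneg _) hle hh

theorem tsum_abs_le {ι : Type*} {g h : ι → ℝ} (hh : Summable h) (hle : ∀ j, |g j| ≤ h j) :
    ∑' j, |g j| ≤ ∑' j, h j :=
  Summable.tsum_le_tsum hle (sum_abs_of_le hh hle) hh

theorem abs_tsum_le {ι : Type*} {g h : ι → ℝ} (hh : Summable h) (hle : ∀ j, |g j| ≤ h j) :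
    |∑' j, g j| ≤ ∑' j, h j := by
  refine le_trans ?_ (tsum_abs_le hh hle)
  simpa [Real.norm_eq_abs] using norm_tsum_le_tsum_norm (f := g)
    (by simpa [Real.norm_eq_abs] using sum_abs_of_le hh hle)

theorem zshift_summable {h : ℤ → ℝ} (hs : Summable h) (c : ℤ) :
    Summable (fun j => h (j + c)) :=
  ((Equiv.addRight c).summable_iff).2 hs

theorem zshift_tsum (h : ℤ → ℝ) (c : ℤ) : ∑' j, h (j + c) = ∑' j, h j :=
  (Equiv.addRight c).tsum_eq h

theorem zshift_summable' {h : ℤ → ℝ} (hs : Summable h) (c : ℤ) :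
    Summable (fun j => h (j - c)) :=
  ((Equiv.subRight c).summable_iff).2 hs

theorem zshift_tsum' (h : ℤ → ℝ) (c : ℤ) : ∑' j, h (j - c) = ∑' j, h j :=
  (Equiv.subRight c).tsum_eq h


theorem lipDeriv {g : ℝ → ℝ} (hg : Differentiable ℝ g) {C : ℝ}
    (hC : ∀ x, |deriv g x| ≤ C) (a b : ℝ) : |g b - g a| ≤ C * |b - a| := by
  have := Convex.norm_image_sub_le_of_norm_deriv_le (f := g) (s := Set.univ)
    (fun x _ => hg x) (fun x _ => hC x) convex_univ
    (Set.mem_univ a) (Set.mem_univ b)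
  simpa [Real.norm_eq_abs] using this

theorem taylorBound {g : ℝ → ℝ} (hg : Differentiable ℝ g)
    (hg' : Differentiable ℝ (deriv g)) {C : ℝ}
    (hC : ∀ x, |deriv (deriv g) x| ≤ C) (a b : ℝ) :
    |g b - g a - deriv g a * (b - a)| ≤ C * (b - a) ^ 2 := by
  have hC0 : 0 ≤ C := le_trans (abs_nonneg _) (hC 0)
  set h : ℝ → ℝ := fun x => g x - deriv g a * x with hh
  have hdh : ∀ x, deriv h x = deriv g x - deriv g a := by
    intro x
    rw [hh]
    rw [deriv_fun_sub (hg x) (by fun_prop)]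
    have : deriv (fun x : ℝ => deriv g a * x) x = deriv g a := by
      simpa using ((hasDerivAt_id x).const_mul (deriv g a)).deriv
    simp only [this]
  have hhd : Differentiable ℝ h := by fun_prop
  have key : ∀ x ∈ Set.uIcc a b, ‖deriv h x‖ ≤ C * |b - a| := by
    intro x hx
    rw [hdh, Real.norm_eq_abs]
    have h1 := lipDeriv hg' hC a x
    have hxa : |x - a| ≤ |b - a| := by
      rw [Set.uIcc_eq_union] at hx
      rcases hx with hx | hx <;> rcases Set.mem_Icc.1 hx with ⟨u1, u2⟩ <;>
        rw [abs_le] <;> constructor <;>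
        nlinarith [le_abs_self (b - a), neg_abs_le (b - a)]
    calc |deriv g x - deriv g a| ≤ C * |x - a| := h1
    _ ≤ C * |b - a| := by nlinarith
  have := Convex.norm_image_sub_le_of_norm_deriv_le (f := h) (s := Set.uIcc a b)
    (fun x _ => (hhd x)) key (convex_uIcc a b)
    (Set.left_mem_uIcc) (Set.right_mem_uIcc)
  have e : h b - h a = g b - g a - deriv g a * (b - a) := by rw [hh]; ring
  rw [e, Real.norm_eq_abs, Real.norm_eq_abs] at this
  calc |g b - g a - deriv g a * (b-a)| ≤ C * |b-a| * |b-a| := this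
  _ = C * (b-a)^2 := by rw [mul_assoc, ← abs_mul, abs_of_nonneg (mul_self_nonneg _)]; ring


section Fderivs
variable {f : ℝ → ℝ → ℝ} {L M B : ℝ}

theorem hfr2 (hf : ContDiff ℝ 2 (Function.uncurry f)) (r : ℝ) : ContDiff ℝ 2 (f r) :=
  hf.comp (contDiff_const.prodMk contDiff_id)

theorem hfa2 (hf : ContDiff ℝ 2 (Function.uncurry f)) (a : ℝ) :
    ContDiff ℝ 2 (fun x => f x a) :=
  hf.comp (contDiff_id.prodMk contDiff_const)

theorem diff_fr (hf : ContDiff ℝ 2 (Function.uncurry f)) (r : ℝ) : Differentiable ℝ (f r) :=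
  (hfr2 hf r).differentiable two_ne_zero

theorem diff_deriv_fr (hf : ContDiff ℝ 2 (Function.uncurry f)) (r : ℝ) :
    Differentiable ℝ (deriv (f r)) := by
  have h2 : ContDiff ℝ ((1:WithTop ℕ∞) + 1) (f r) := by
    have := hfr2 hf r
    norm_num at this ⊢
    exact this
  exact ((contDiff_succ_iff_deriv.mp h2).2.2).differentiable one_ne_zero

theorem deriv2_eq (hf : ContDiff ℝ 2 (Function.uncurry f)) (x a : ℝ) :
    deriv (f x) a = (fderiv ℝ (Function.uncurry f) (x, a)) (0, 1) := by
  have hF : HasFDerivAt (Function.uncurry f) (fderiv ℝ (Function.uncurry f) (x, a)) (x, a) :=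
    (hf.differentiable two_ne_zero (x, a)).hasFDerivAt
  have hg : HasDerivAt (fun b : ℝ => ((x : ℝ), b)) (((0 : ℝ), (1 : ℝ))) a :=
    (hasDerivAt_const a x).prodMk (hasDerivAt_id a)
  exact (hF.comp_hasDerivAt a hg).deriv

theorem dmix (hf : ContDiff ℝ 2 (Function.uncurry f)) (a : ℝ) :
    Differentiable ℝ (fun x => deriv (f x) a) := by
  have he : (fun x => deriv (f x) a) =
      fun x => (fderiv ℝ (Function.uncurry f) (x, a)) ((0 : ℝ), (1 : ℝ)) := by
    funext x; exact deriv2_eq hf x a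
  rw [he]
  have h1 : ContDiff ℝ 1 (fderiv ℝ (Function.uncurry f)) :=
    hf.fderiv_right (by norm_num)
  have h2 : ContDiff ℝ 1 (fun x : ℝ => fderiv ℝ (Function.uncurry f) (x, a)) :=
    h1.comp (contDiff_id.prodMk contDiff_const)
  exact (h2.clm_apply contDiff_const).differentiable one_ne_zero

theorem lipF1 (hf : ContDiff ℝ 2 (Function.uncurry f))
    (hL : ∀ r A : ℝ, |deriv (fun x => f x A) r| ≤ L) (a b A : ℝ) :
    |f b A - f a A| ≤ L * |b - a| :=
  lipDeriv ((hfa2 hf A).differentiable two_ne_zero) (fun x => hL x A) a b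

theorem absF (hf : ContDiff ℝ 2 (Function.uncurry f)) (hf0 : ∀ A : ℝ, f 0 A = 0)
    (hL : ∀ r A : ℝ, |deriv (fun x => f x A) r| ≤ L) (r A : ℝ) : |f r A| ≤ L * |r| := by
  have := lipF1 hf hL 0 r A
  simpa [hf0 A] using this

theorem lipF2 (hf : ContDiff ℝ 2 (Function.uncurry f))
    (hdA : ∀ r a : ℝ, |deriv (f r) a| ≤ M * |r|) (r a b : ℝ) :
    |f r b - f r a| ≤ M * |r| * |b - a| :=
  lipDeriv (diff_fr hf r) (fun x => hdA r x) a b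

theorem key2 (hf : ContDiff ℝ 2 (Function.uncurry f))
    (hBρA : ∀ r a : ℝ, |deriv (fun x => deriv (f x) a) r| ≤ B) (w w' a b : ℝ) :
    |(f w b - f w a) - (f w' b - f w' a)| ≤ B * |w - w'| * |b - a| := by
  set ψ : ℝ → ℝ := fun c => f w c - f w' c with hψ
  have hψd : Differentiable ℝ ψ := (diff_fr hf w).sub (diff_fr hf w')
  have hdψ : ∀ c, |deriv ψ c| ≤ B * |w - w'| := by
    intro c
    have : deriv ψ c = deriv (f w) c - deriv (f w') c := by
      rw [hψ]; rw [deriv_fun_sub (diff_fr hf w c) (diff_fr hf w' c)]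
    rw [this]
    exact lipDeriv (dmix hf c) (fun x => hBρA x c) w' w
  have h := lipDeriv hψd hdψ a b
  have e : f w b - f w a - (f w' b - f w' a) = ψ b - ψ a := by rw [hψ]; simp; ring
  rw [e]; exact h

theorem key1 (hf : ContDiff ℝ 2 (Function.uncurry f))
    (hdA : ∀ r a : ℝ, |deriv (f r) a| ≤ M * |r|)
    (hdAA : ∀ r a : ℝ, |iteratedDeriv 2 (f r) a| ≤ M * |r|) (w Am A0 Ap : ℝ) :
    |(f w Ap - f w A0) - (f w A0 - f w Am)| ≤
      M * |w| * ((Ap - A0) ^ 2 + (Am - A0) ^ 2 + |Ap - 2 * A0 + Am|) := by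
  have hdd : ∀ x, |deriv (deriv (f w)) x| ≤ M * |w| := by
    intro x
    have := hdAA w x
    rwa [show iteratedDeriv 2 (f w) = deriv (deriv (f w)) by
      rw [iteratedDeriv_succ, iteratedDeriv_one]] at this
  have T1 := taylorBound (diff_fr hf w) (diff_deriv_fr hf w) hdd A0 Ap
  have T2 := taylorBound (diff_fr hf w) (diff_deriv_fr hf w) hdd A0 Am
  have hd0 : |deriv (f w) A0| ≤ M * |w| := hdA w A0
  have e : (f w Ap - f w A0) - (f w A0 - f w Am) =
      (f w Ap - f w A0 - deriv (f w) A0 * (Ap - A0)) +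
      (f w Am - f w A0 - deriv (f w) A0 * (Am - A0)) +
      deriv (f w) A0 * (Ap - 2 * A0 + Am) := by ring
  rw [e]
  have h3 : |deriv (f w) A0 * (Ap - 2 * A0 + Am)| ≤ M * |w| * |Ap - 2 * A0 + Am| := by
    rw [abs_mul]; exact mul_le_mul_of_nonneg_right hd0 (abs_nonneg _)
  calc |_ + _ + deriv (f w) A0 * (Ap - 2 * A0 + Am)| ≤
      |_ + _| + |deriv (f w) A0 * (Ap - 2 * A0 + Am)| := abs_add_le _ _
  _ ≤ (|f w Ap - f w A0 - deriv (f w) A0 * (Ap - A0)| +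
      |f w Am - f w A0 - deriv (f w) A0 * (Am - A0)|) +
      |deriv (f w) A0 * (Ap - 2 * A0 + Am)| := by gcongr; exact abs_add_le _ _
  _ ≤ M * |w| * ((Ap - A0) ^ 2 + (Am - A0) ^ 2 + |Ap - 2 * A0 + Am|) := by
      nlinarith [abs_nonneg (Ap - 2*A0 + Am)]

end Fderivs

theorem mu_second_diff {μ : ℝ → ℝ} (hμ : ContDiff ℝ 2 μ) {Cμ'' : ℝ}
    (hCμ'' : ∀ x : ℝ, |deriv (deriv μ) x| ≤ Cμ'') (x d : ℝ) :
    |μ (x + 2 * d) - 2 * μ (x + d) + μ x| ≤ Cμ'' * d ^ 2 := by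
  have hμd : Differentiable ℝ μ := hμ.differentiable two_ne_zero
  have hμd' : Differentiable ℝ (deriv μ) := by
    have h2 : ContDiff ℝ ((1 : WithTop ℕ∞) + 1) μ := by norm_num; exact hμ
    exact ((contDiff_succ_iff_deriv.mp h2).2.2).differentiable one_ne_zero
  set ν : ℝ → ℝ := fun y => μ (y + d) - μ y with hν
  have hshift : Differentiable ℝ (fun y : ℝ => μ (y + d)) :=
    hμd.comp (differentiable_id.add_const d)
  have hνd : Differentiable ℝ ν := hshift.sub hμd
  have hν' : ∀ y, |deriv ν y| ≤ Cμ'' * |d| := by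
    intro y
    have e : deriv ν y = deriv μ (y + d) - deriv μ y := by
      rw [hν, deriv_fun_sub (hshift y) (hμd y), deriv_comp_add_const]
    rw [e]
    have := lipDeriv hμd' hCμ'' y (y + d)
    simpa using this
  have h := lipDeriv hνd hν' x (x + d)
  have e2 : ν (x + d) - ν x = μ (x + 2 * d) - 2 * μ (x + d) + μ x := by
    rw [hν]; ring_nf
  rw [e2] at h
  have e3 : Cμ'' * |d| * |x + d - x| = Cμ'' * d ^ 2 := by
    rw [show x + d - x = d by ring, mul_assoc, ← abs_mul, abs_of_nonneg (mul_self_nonneg d)]; ring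
  rw [e3] at h
  exact h

theorem tsum_coeff_sub {c1 c2 x : ℤ → ℝ} {K C : ℝ}
    (hx : Summable fun l => |x l|)
    (hc1 : ∀ l, |c1 l| ≤ C) (hc2 : ∀ l, |c2 l| ≤ C) (hK : ∀ l, |c1 l - c2 l| ≤ K) :
    |(∑' l, c1 l * x l) - ∑' l, c2 l * x l| ≤ K * ∑' l, |x l| := by
  have key : ∀ (c : ℤ → ℝ), (∀ l, |c l| ≤ C) → Summable fun l => c l * x l := by
    intro c hc
    refine sum_of_le (hx.mul_left C) (fun l => ?_)
    rw [abs_mul]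
    exact mul_le_mul_of_nonneg_right (hc l) (abs_nonneg _)
  rw [← Summable.tsum_sub (key c1 hc1) (key c2 hc2)]
  refine le_trans (abs_tsum_le (hx.mul_left K) ?_) (le_of_eq tsum_mul_left)
  intro l
  rw [show c1 l * x l - c2 l * x l = (c1 l - c2 l) * x l by ring, abs_mul]
  exact mul_le_mul_of_nonneg_right (hK l) (abs_nonneg _)

theorem tsum_coeff_sub2 {c1 c2 c3 x : ℤ → ℝ} {K C : ℝ}
    (hx : Summable fun l => |x l|)
    (hc1 : ∀ l, |c1 l| ≤ C) (hc2 : ∀ l, |c2 l| ≤ C) (hc3 : ∀ l, |c3 l| ≤ C)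
    (hK : ∀ l, |c1 l - 2 * c2 l + c3 l| ≤ K) :
    |(∑' l, c1 l * x l) - 2 * (∑' l, c2 l * x l) + ∑' l, c3 l * x l| ≤ K * ∑' l, |x l| := by
  have key : ∀ (c : ℤ → ℝ), (∀ l, |c l| ≤ C) → Summable fun l => c l * x l := by
    intro c hc
    refine sum_of_le (hx.mul_left C) (fun l => ?_)
    rw [abs_mul]
    exact mul_le_mul_of_nonneg_right (hc l) (abs_nonneg _)
  have e : (∑' l, c1 l * x l) - 2 * (∑' l, c2 l * x l) + ∑' l, c3 l * x l
      = ∑' l, (c1 l * x l - 2 * (c2 l * x l) + c3 l * x l) := by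
    rw [Summable.tsum_add ((key c1 hc1).sub (((key c2 hc2)).mul_left 2)) (key c3 hc3),
      Summable.tsum_sub (key c1 hc1) ((key c2 hc2).mul_left 2), tsum_mul_left]
  rw [e]
  refine le_trans (abs_tsum_le (hx.mul_left K) ?_) (le_of_eq tsum_mul_left)
  intro l
  rw [show c1 l * x l - 2 * (c2 l * x l) + c3 l * x l = (c1 l - 2 * c2 l + c3 l) * x l by ring,
    abs_mul]
  exact mul_le_mul_of_nonneg_right (hK l) (abs_nonneg _)

set_option maxHeartbeats 2000000 in
/-- summed bound on the corrector flux-difference terms. -/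
theorem stmt19 (f : ℝ → ℝ → ℝ) (μ : ℝ → ℝ) (lam θ L M B Cμ' Cμ'' m R : ℝ)
    (hf : ContDiff ℝ 2 (Function.uncurry f)) (hf0 : ∀ A : ℝ, f 0 A = 0)
    (hL : ∀ r A : ℝ, |deriv (fun x => f x A) r| ≤ L)
    (hM : 0 < M) (hdA : ∀ r a : ℝ, |deriv (f r) a| ≤ M * |r|)
    (hdAA : ∀ r a : ℝ, |iteratedDeriv 2 (f r) a| ≤ M * |r|)
    (hBρρ : ∀ r a : ℝ, |iteratedDeriv 2 (fun x => f x a) r| ≤ B)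
    (hBρA : ∀ r a : ℝ, |deriv (fun x => deriv (f x) a) r| ≤ B)
    (hBAA : ∀ r a : ℝ, |iteratedDeriv 2 (f r) a| ≤ B)
    (hμ : ContDiff ℝ 2 μ) (hμc : HasCompactSupport μ)
    (hCμ' : ∀ x : ℝ, |deriv μ x| ≤ Cμ')
    (hCμ'' : ∀ x : ℝ, |iteratedDeriv 2 μ x| ≤ Cμ'')
    (hθ0 : 0 ≤ θ) (hθ1 : θ ≤ 1 / 2) (hlam : 0 < lam) :
    ∃ K₇ K₈ : ℝ, 0 ≤ K₇ ∧ 0 ≤ K₈ ∧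
      ∀ (Δx Δt α : ℝ) (ρ : ℤ → ℝ),
        0 < Δx → Δx ≤ 1 → 0 < Δt → lam = Δt / Δx →
        0 < α → α < 8 / 27 →
        (∀ j : ℤ, 0 ≤ ρ j) → Summable ρ →
        Δx * (∑' l : ℤ, ρ l) = m →
        (∀ k : ℤ, ρ k ≤ R) →
        Summable (fun j : ℤ => |ρ (j + 1) - ρ j|) →
        lam * (∑' j : ℤ, |Dterm f μ θ α lam Δx ρ j|) ≤
          Δt * K₇ + Δt * K₈ * ∑' j : ℤ, |ρ (j + 1) - ρ j| := by
  -- Sign facts about the given constants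
  have hL0 : 0 ≤ L := (abs_nonneg _).trans (hL 0 0)
  have hB0 : 0 ≤ B := (abs_nonneg _).trans (hBρA 0 0)
  have hCp0 : 0 ≤ Cμ' := (abs_nonneg _).trans (hCμ' 0)
  have hCpp0 : 0 ≤ Cμ'' := (abs_nonneg _).trans (hCμ'' 0)
  obtain ⟨Cbnd, hCbnd⟩ := hμc.exists_bound_of_continuous hμ.continuous
  have hCbnd' : ∀ x, |μ x| ≤ Cbnd := fun x => by simpa using hCbnd x
  have hμd : Differentiable ℝ μ := hμ.differentiable two_ne_zero
  have hμlip : ∀ x y, |μ y - μ x| ≤ Cμ' * |y - x| := fun x y => lipDeriv hμd hCμ' x y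
  have hCμ''' : ∀ x : ℝ, |deriv (deriv μ) x| ≤ Cμ'' := by
    intro x
    have := hCμ'' x
    rwa [show iteratedDeriv 2 μ = deriv (deriv μ) by
      rw [iteratedDeriv_succ, iteratedDeriv_one]] at this
  have hμ2 : ∀ x d : ℝ, |μ (x + 2 * d) - 2 * μ (x + d) + μ x| ≤ Cμ'' * d ^ 2 :=
    mu_second_diff hμ hCμ'''
  have h1L0 : 0 ≤ 1 + lam * L := by
    have := mul_nonneg hlam.le hL0
    linarith
  set mm : ℝ := |m| with hmm
  have hmm0 : 0 ≤ mm := abs_nonneg m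
  set S : ℝ := 4 * (1 + lam * L) * mm with hSdef
  have hS0 : 0 ≤ S := by rw [hSdef]; positivity
  set Ca : ℝ := Cμ' * S / 2 with hCadef
  have hCa0 : 0 ≤ Ca := by rw [hCadef]; positivity
  set Cb : ℝ := Cμ'' * S / 2 with hCbdef
  have hCb0 : 0 ≤ Cb := by rw [hCbdef]; positivity
  set CC : ℝ := 2 * Cμ' * mm with hCCdef
  have hCC0 : 0 ≤ CC := by rw [hCCdef]; positivity
  refine ⟨M * S / 2 * (2 * Ca ^ 2 + Cb) + 2 * B * Ca * lam * M * CC * mm,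
    2 * B * Ca * (1 + lam * L), ?_, ?_, ?_⟩
  · have h1 : 0 ≤ M * S / 2 * (2 * Ca ^ 2 + Cb) := by positivity
    have h2 : 0 ≤ 2 * B * Ca * lam * M * CC * mm := by positivity
    linarith
  · positivity
  intro Δx Δt α ρ hΔx hΔx1 hΔt hlamEq hα hα8 hρ0 hρs hmass hRb hTVs
  have hΔ0 : Δx ≠ 0 := ne_of_gt hΔx
  set P : ℝ := ∑' l, ρ l with hPdef
  clear_value P
  have hP0 : 0 ≤ P := by rw [hPdef]; exact tsum_nonneg hρ0
  have hmassP : Δx * P = m := hmass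
  have hm0 : 0 ≤ m := by rw [← hmassP]; exact mul_nonneg hΔx.le hP0
  have hmmm : mm = m := by rw [hmm]; exact abs_of_nonneg hm0
  have hlamΔ : lam * Δx = Δt := by rw [hlamEq]; field_simp
  set T : ℝ := ∑' j, |ρ (j + 1) - ρ j| with hT
  clear_value T
  -- bI bounds interface values
  set bI : ℤ → ℝ := fun j => ρ j + θ * (ρ (j + 1) + ρ j) with hbIdef
  have hbI0 : ∀ j, 0 ≤ bI j := by
    intro j
    have := hρ0 j; have := hρ0 (j + 1)
    rw [hbIdef]; dsimp only
    have := mul_nonneg hθ0 (add_nonneg (hρ0 (j + 1)) (hρ0 j))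
    linarith
  have hρs1 : Summable (fun j : ℤ => ρ (j + 1)) := zshift_summable hρs 1
  have hbIs : Summable bI := hρs.add ((hρs1.add hρs).mul_left θ)
  have htsbI : ∑' j, bI j ≤ 2 * P := by
    rw [hbIdef]
    rw [Summable.tsum_add hρs ((hρs1.add hρs).mul_left θ), tsum_mul_left,
      Summable.tsum_add hρs1 hρs, zshift_tsum ρ 1, ← hPdef]
    have := mul_le_mul_of_nonneg_right hθ1 (add_nonneg hP0 hP0)
    linarith
  have hIL : ∀ j, |intL θ ρ j| ≤ bI j := by
    intro j
    rw [hbIdef]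
    unfold intL
    have h1 := slp_le_right hθ0 ρ j
    have h2 : |ρ (j + 1) - ρ j| ≤ ρ (j + 1) + ρ j := by
      have := abs_sub (ρ (j + 1)) (ρ j)
      rw [abs_of_nonneg (hρ0 (j+1)), abs_of_nonneg (hρ0 j)] at this
      exact this
    calc |ρ j + slp θ ρ j / 2| ≤ |ρ j| + |slp θ ρ j| / 2 := by
          rw [show |slp θ ρ j| / 2 = |slp θ ρ j / 2| by rw [abs_div]; norm_num]
          exact abs_add_le _ _
    _ ≤ ρ j + θ * (ρ (j + 1) + ρ j) := by
          rw [abs_of_nonneg (hρ0 j)]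
          have h3 : θ * |ρ (j + 1) - ρ j| ≤ θ * (ρ (j + 1) + ρ j) :=
            mul_le_mul_of_nonneg_left h2 hθ0
          linarith
  have hIR : ∀ j, |intR θ ρ j| ≤ bI j := by
    intro j
    rw [hbIdef]
    unfold intR
    have h1 := slp_le_right hθ0 ρ j
    have h2 : |ρ (j + 1) - ρ j| ≤ ρ (j + 1) + ρ j := by
      have := abs_sub (ρ (j + 1)) (ρ j)
      rw [abs_of_nonneg (hρ0 (j+1)), abs_of_nonneg (hρ0 j)] at this
      exact this
    calc |ρ j - slp θ ρ j / 2| ≤ |ρ j| + |slp θ ρ j| / 2 := by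
          rw [show |slp θ ρ j| / 2 = |slp θ ρ j / 2| by rw [abs_div]; norm_num]
          exact abs_sub _ _
    _ ≤ ρ j + θ * (ρ (j + 1) + ρ j) := by
          rw [abs_of_nonneg (hρ0 j)]
          have h3 : θ * |ρ (j + 1) - ρ j| ≤ θ * (ρ (j + 1) + ρ j) :=
            mul_le_mul_of_nonneg_left h2 hθ0
          linarith
  have habsf : ∀ r A, |f r A| ≤ L * |r| := absF hf hf0 hL
  -- mid-value bounds
  set bM : ℤ → ℝ := fun j => (1 + lam * L) * bI j with hbMdef
  have hbM0 : ∀ j, 0 ≤ bM j := fun j => mul_nonneg h1L0 (hbI0 j)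
  have hbMs : Summable bM := hbIs.mul_left _
  have hmLb : ∀ j, |midL f μ θ lam Δx ρ j| ≤ bM j := by
    intro j
    rw [hbMdef]
    unfold midL
    have h1 := habsf (intL θ ρ j) (AdiscL μ θ Δx ρ j)
    have h2 := habsf (intR θ ρ j) (AdiscR μ θ Δx ρ j)
    have e1 := hIL j
    have e2 := hIR j
    have h3 : |intL θ ρ j - lam / 2 * (f (intL θ ρ j) (AdiscL μ θ Δx ρ j) -
        f (intR θ ρ j) (AdiscR μ θ Δx ρ j))| ≤ |intL θ ρ j| + lam / 2 *
        (|f (intL θ ρ j) (AdiscL μ θ Δx ρ j)| + |f (intR θ ρ j) (AdiscR μ θ Δx ρ j)|) := by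
      refine le_trans (abs_sub _ _) ?_
      rw [abs_mul, abs_of_nonneg (by linarith : (0:ℝ) ≤ lam / 2)]
      gcongr
      exact abs_sub _ _
    refine h3.trans ?_
    have h1' : |f (intL θ ρ j) (AdiscL μ θ Δx ρ j)| ≤ L * bI j :=
      h1.trans (mul_le_mul_of_nonneg_left e1 hL0)
    have h2' : |f (intR θ ρ j) (AdiscR μ θ Δx ρ j)| ≤ L * bI j :=
      h2.trans (mul_le_mul_of_nonneg_left e2 hL0)
    calc |intL θ ρ j| + lam / 2 * (|f (intL θ ρ j) (AdiscL μ θ Δx ρ j)| +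
          |f (intR θ ρ j) (AdiscR μ θ Δx ρ j)|)
        ≤ bI j + lam / 2 * (L * bI j + L * bI j) := by
          have := hbI0 j
          gcongr
    _ = (1 + lam * L) * bI j := by ring
  have hmRb : ∀ j, |midR f μ θ lam Δx ρ j| ≤ bM j := by
    intro j
    rw [hbMdef]
    unfold midR
    have h1 := habsf (intL θ ρ j) (AdiscL μ θ Δx ρ j)
    have h2 := habsf (intR θ ρ j) (AdiscR μ θ Δx ρ j)
    have e1 := hIL j
    have e2 := hIR j
    have h3 : |intR θ ρ j - lam / 2 * (f (intL θ ρ j) (AdiscL μ θ Δx ρ j) -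
        f (intR θ ρ j) (AdiscR μ θ Δx ρ j))| ≤ |intR θ ρ j| + lam / 2 *
        (|f (intL θ ρ j) (AdiscL μ θ Δx ρ j)| + |f (intR θ ρ j) (AdiscR μ θ Δx ρ j)|) := by
      refine le_trans (abs_sub _ _) ?_
      rw [abs_mul, abs_of_nonneg (by linarith : (0:ℝ) ≤ lam / 2)]
      gcongr
      exact abs_sub _ _
    refine h3.trans ?_
    have h1' : |f (intL θ ρ j) (AdiscL μ θ Δx ρ j)| ≤ L * bI j :=
      h1.trans (mul_le_mul_of_nonneg_left e1 hL0)
    have h2' : |f (intR θ ρ j) (AdiscR μ θ Δx ρ j)| ≤ L * bI j :=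
      h2.trans (mul_le_mul_of_nonneg_left e2 hL0)
    calc |intR θ ρ j| + lam / 2 * (|f (intL θ ρ j) (AdiscL μ θ Δx ρ j)| +
          |f (intR θ ρ j) (AdiscR μ θ Δx ρ j)|)
        ≤ bI j + lam / 2 * (L * bI j + L * bI j) := by
          have := hbI0 j
          gcongr
    _ = (1 + lam * L) * bI j := by ring
  have htsbM : ∑' j, bM j ≤ 2 * (1 + lam * L) * P := by
    rw [hbMdef, tsum_mul_left]
    exact le_trans (mul_le_mul_of_nonneg_left htsbI h1L0) (le_of_eq (by ring))
  have hρabs : Summable (fun l : ℤ => |ρ l|) := summable_abs_iff.mpr hρs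
  have hPabs : ∑' l, |ρ l| = P := by
    rw [hPdef]; exact tsum_congr (fun l => abs_of_nonneg (hρ0 l))
  have hADd : ∀ j : ℤ, |Adisc μ Δx ρ (j + 1) - Adisc μ Δx ρ j| ≤ Cμ' * Δx ^ 2 * P := by
    intro j
    unfold Adisc
    rw [← mul_sub, abs_mul, abs_of_nonneg hΔx.le]
    have hK : ∀ l : ℤ, |μ ((((j + 1 : ℤ) : ℝ) - (l : ℝ)) * Δx) -
        μ (((j : ℝ) - (l : ℝ)) * Δx)| ≤ Cμ' * Δx := by
      intro l
      have e : (((j + 1 : ℤ) : ℝ) - (l : ℝ)) * Δx = ((j : ℝ) - (l : ℝ)) * Δx + Δx := by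
        push_cast; ring
      rw [e]
      simpa [abs_of_pos hΔx] using
        hμlip (((j : ℝ) - (l : ℝ)) * Δx) (((j : ℝ) - (l : ℝ)) * Δx + Δx)
    have key := tsum_coeff_sub (x := ρ) (C := Cbnd) (K := Cμ' * Δx)
      (c1 := fun l : ℤ => μ ((((j + 1 : ℤ) : ℝ) - (l : ℝ)) * Δx))
      (c2 := fun l : ℤ => μ (((j : ℝ) - (l : ℝ)) * Δx))
      hρabs (fun l => hCbnd' _) (fun l => hCbnd' _) hK
    refine le_trans (mul_le_mul_of_nonneg_left key hΔx.le) (le_of_eq ?_)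
    rw [hPabs]; ring
  have hADd' : ∀ j : ℤ, |Adisc μ Δx ρ j - Adisc μ Δx ρ (j - 1)| ≤ Cμ' * Δx ^ 2 * P := by
    intro j
    have h2 := hADd (j - 1)
    rwa [sub_add_cancel] at h2
  have hsb : ∀ j, |sdisc μ θ Δx ρ j| ≤ 2 * θ * (Cμ' * Δx ^ 2 * P) := by
    intro j
    unfold sdisc
    rw [abs_mul, abs_of_nonneg hθ0]
    have h1 := hADd j
    have h2 := hADd' j
    have e : Adisc μ Δx ρ (j + 1) - Adisc μ Δx ρ (j - 1) =
        (Adisc μ Δx ρ (j + 1) - Adisc μ Δx ρ j) + (Adisc μ Δx ρ j - Adisc μ Δx ρ (j - 1)) := by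
      ring
    have h3 : |Adisc μ Δx ρ (j + 1) - Adisc μ Δx ρ (j - 1)| ≤ 2 * (Cμ' * Δx ^ 2 * P) := by
      rw [e]; refine le_trans (abs_add_le _ _) ?_; linarith
    have := mul_le_mul_of_nonneg_left h3 hθ0
    linarith
  have hCCΔ : 2 * (Cμ' * Δx ^ 2 * P) = CC * Δx := by
    rw [hCCdef, hmmm, ← hmassP]; ring
  have hALd : ∀ j, |AdiscL μ θ Δx ρ j - AdiscL μ θ Δx ρ (j - 1)| ≤ CC * Δx := by
    intro j
    unfold AdiscL
    have e : Adisc μ Δx ρ j + sdisc μ θ Δx ρ j / 2 -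
        (Adisc μ Δx ρ (j - 1) + sdisc μ θ Δx ρ (j - 1) / 2) =
        (Adisc μ Δx ρ j - Adisc μ Δx ρ (j - 1)) +
        (sdisc μ θ Δx ρ j / 2 - sdisc μ θ Δx ρ (j - 1) / 2) := by ring
    rw [e, ← hCCΔ]
    refine le_trans (abs_add_le _ _) ?_
    have h1 := hADd' j
    have h2 := hsb j
    have h3 := hsb (j - 1)
    have h4 : |sdisc μ θ Δx ρ j / 2 - sdisc μ θ Δx ρ (j - 1) / 2| ≤
        |sdisc μ θ Δx ρ j| / 2 + |sdisc μ θ Δx ρ (j - 1)| / 2 := by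
      refine le_trans (abs_sub _ _) ?_
      rw [abs_div, abs_div]; norm_num
    have hθP : 2 * θ * (Cμ' * Δx ^ 2 * P) ≤ Cμ' * Δx ^ 2 * P := by
      have hx : 0 ≤ Cμ' * Δx ^ 2 * P := mul_nonneg (mul_nonneg hCp0 (sq_nonneg Δx)) hP0
      have h5 := mul_le_mul_of_nonneg_right hθ1 hx
      linarith
    linarith
  have hARd : ∀ j, |AdiscR μ θ Δx ρ j - AdiscR μ θ Δx ρ (j - 1)| ≤ CC * Δx := by
    intro j
    unfold AdiscR
    have e : Adisc μ Δx ρ j - sdisc μ θ Δx ρ j / 2 -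
        (Adisc μ Δx ρ (j - 1) - sdisc μ θ Δx ρ (j - 1) / 2) =
        (Adisc μ Δx ρ j - Adisc μ Δx ρ (j - 1)) -
        (sdisc μ θ Δx ρ j / 2 - sdisc μ θ Δx ρ (j - 1) / 2) := by ring
    rw [e, ← hCCΔ]
    refine le_trans (abs_sub _ _) ?_
    have h1 := hADd' j
    have h2 := hsb j
    have h3 := hsb (j - 1)
    have h4 : |sdisc μ θ Δx ρ j / 2 - sdisc μ θ Δx ρ (j - 1) / 2| ≤
        |sdisc μ θ Δx ρ j| / 2 + |sdisc μ θ Δx ρ (j - 1)| / 2 := by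
      refine le_trans (abs_sub _ _) ?_
      rw [abs_div, abs_div]; norm_num
    have hθP : 2 * θ * (Cμ' * Δx ^ 2 * P) ≤ Cμ' * Δx ^ 2 * P := by
      have hx : 0 ≤ Cμ' * Δx ^ 2 * P := mul_nonneg (mul_nonneg hCp0 (sq_nonneg Δx)) hP0
      have h5 := mul_le_mul_of_nonneg_right hθ1 hx
      linarith
    linarith
  have hmLs : Summable (fun l : ℤ => |midL f μ θ lam Δx ρ l|) := sum_abs_of_le hbMs hmLb
  have hmRs : Summable (fun l : ℤ => |midR f μ θ lam Δx ρ l|) := sum_abs_of_le hbMs hmRb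
  have htsmL : ∑' l, |midL f μ θ lam Δx ρ l| ≤ 2 * (1 + lam * L) * P :=
    le_trans (tsum_abs_le hbMs hmLb) htsbM
  have htsmR : ∑' l, |midR f μ θ lam Δx ρ l| ≤ 2 * (1 + lam * L) * P :=
    le_trans (tsum_abs_le hbMs hmRb) htsbM
  have hAMsplit : ∀ j : ℤ, Amid f μ θ lam Δx ρ j = Δx / 2 *
      ((∑' l : ℤ, μ (((j : ℝ) + 1 - (l : ℝ)) * Δx) * midR f μ θ lam Δx ρ l) +
       (∑' l : ℤ, μ (((j : ℝ) - (l : ℝ)) * Δx) * midL f μ θ lam Δx ρ l)) := by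
    intro j
    unfold Amid
    congr 1
    refine Summable.tsum_add ?_ ?_
    · exact sum_of_le (hmRs.mul_left Cbnd) (fun l => by
        rw [abs_mul]; exact mul_le_mul_of_nonneg_right (hCbnd' _) (abs_nonneg _))
    · exact sum_of_le (hmLs.mul_left Cbnd) (fun l => by
        rw [abs_mul]; exact mul_le_mul_of_nonneg_right (hCbnd' _) (abs_nonneg _))
  have hCpΔ0 : 0 ≤ Cμ' * Δx := mul_nonneg hCp0 hΔx.le
  have hAMd : ∀ j : ℤ, |Amid f μ θ lam Δx ρ (j + 1) - Amid f μ θ lam Δx ρ j| ≤ Ca * Δx := by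
    intro j
    rw [hAMsplit (j + 1), hAMsplit j]
    set R1 : ℝ := ∑' l : ℤ, μ ((((j + 1 : ℤ) : ℝ) + 1 - (l : ℝ)) * Δx) * midR f μ θ lam Δx ρ l with hR1
    set L1 : ℝ := ∑' l : ℤ, μ ((((j + 1 : ℤ) : ℝ) - (l : ℝ)) * Δx) * midL f μ θ lam Δx ρ l with hL1
    set R0 : ℝ := ∑' l : ℤ, μ (((j : ℝ) + 1 - (l : ℝ)) * Δx) * midR f μ θ lam Δx ρ l with hR0
    set L0 : ℝ := ∑' l : ℤ, μ (((j : ℝ) - (l : ℝ)) * Δx) * midL f μ θ lam Δx ρ l with hL0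
    have keyR : |R1 - R0| ≤ Cμ' * Δx * ∑' l, |midR f μ θ lam Δx ρ l| :=
      tsum_coeff_sub (x := midR f μ θ lam Δx ρ) (C := Cbnd) (K := Cμ' * Δx)
      (c1 := fun l : ℤ => μ ((((j + 1 : ℤ) : ℝ) + 1 - (l : ℝ)) * Δx))
      (c2 := fun l : ℤ => μ (((j : ℝ) + 1 - (l : ℝ)) * Δx))
      hmRs (fun l => hCbnd' _) (fun l => hCbnd' _) (fun l => by
        have e : (((j + 1 : ℤ) : ℝ) + 1 - (l : ℝ)) * Δx
            = ((j : ℝ) + 1 - (l : ℝ)) * Δx + Δx := by push_cast; ring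
        rw [e]
        simpa [abs_of_pos hΔx] using
          hμlip (((j : ℝ) + 1 - (l : ℝ)) * Δx) (((j : ℝ) + 1 - (l : ℝ)) * Δx + Δx))
    have keyL : |L1 - L0| ≤ Cμ' * Δx * ∑' l, |midL f μ θ lam Δx ρ l| :=
      tsum_coeff_sub (x := midL f μ θ lam Δx ρ) (C := Cbnd) (K := Cμ' * Δx)
      (c1 := fun l : ℤ => μ ((((j + 1 : ℤ) : ℝ) - (l : ℝ)) * Δx))
      (c2 := fun l : ℤ => μ (((j : ℝ) - (l : ℝ)) * Δx))
      hmLs (fun l => hCbnd' _) (fun l => hCbnd' _) (fun l => by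
        have e : (((j + 1 : ℤ) : ℝ) - (l : ℝ)) * Δx
            = ((j : ℝ) - (l : ℝ)) * Δx + Δx := by push_cast; ring
        rw [e]
        simpa [abs_of_pos hΔx] using
          hμlip (((j : ℝ) - (l : ℝ)) * Δx) (((j : ℝ) - (l : ℝ)) * Δx + Δx))
    clear_value R1 L1 R0 L0
    have t2 : |R1 - R0| ≤ Cμ' * Δx * (2 * (1 + lam * L) * P) :=
      keyR.trans (mul_le_mul_of_nonneg_left htsmR hCpΔ0)
    have t3 : |L1 - L0| ≤ Cμ' * Δx * (2 * (1 + lam * L) * P) :=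
      keyL.trans (mul_le_mul_of_nonneg_left htsmL hCpΔ0)
    have t1 : |Δx / 2 * (R1 + L1) - Δx / 2 * (R0 + L0)| ≤
        Δx / 2 * (|R1 - R0| + |L1 - L0|) := by
      rw [show Δx / 2 * (R1 + L1) - Δx / 2 * (R0 + L0)
          = Δx / 2 * ((R1 - R0) + (L1 - L0)) by ring, abs_mul,
        abs_of_nonneg (by linarith : (0:ℝ) ≤ Δx / 2)]
      exact mul_le_mul_of_nonneg_left (abs_add_le _ _) (by linarith)
    have hCaΔ : Δx / 2 * (Cμ' * Δx * (2 * (1 + lam * L) * P) +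
        Cμ' * Δx * (2 * (1 + lam * L) * P)) = Ca * Δx := by
      rw [hCadef, hSdef, hmmm, ← hmassP]; ring
    refine t1.trans (le_trans ?_ (le_of_eq hCaΔ))
    exact mul_le_mul_of_nonneg_left (by linarith) (by linarith)
  have hAMd' : ∀ j : ℤ, |Amid f μ θ lam Δx ρ j - Amid f μ θ lam Δx ρ (j - 1)| ≤ Ca * Δx := by
    intro j
    have h := hAMd (j - 1)
    rwa [sub_add_cancel] at h
  have hAM2 : ∀ j : ℤ, |Amid f μ θ lam Δx ρ (j + 1) - 2 * Amid f μ θ lam Δx ρ j +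
      Amid f μ θ lam Δx ρ (j - 1)| ≤ Cb * Δx ^ 2 := by
    intro j
    rw [hAMsplit (j + 1), hAMsplit j, hAMsplit (j - 1)]
    set R1 : ℝ := ∑' l : ℤ, μ ((((j + 1 : ℤ) : ℝ) + 1 - (l : ℝ)) * Δx) * midR f μ θ lam Δx ρ l with hR1
    set L1 : ℝ := ∑' l : ℤ, μ ((((j + 1 : ℤ) : ℝ) - (l : ℝ)) * Δx) * midL f μ θ lam Δx ρ l with hL1
    set R0 : ℝ := ∑' l : ℤ, μ (((j : ℝ) + 1 - (l : ℝ)) * Δx) * midR f μ θ lam Δx ρ l with hR0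
    set L0 : ℝ := ∑' l : ℤ, μ (((j : ℝ) - (l : ℝ)) * Δx) * midL f μ θ lam Δx ρ l with hL0
    set Rm : ℝ := ∑' l : ℤ, μ ((((j - 1 : ℤ) : ℝ) + 1 - (l : ℝ)) * Δx) * midR f μ θ lam Δx ρ l with hRm
    set Lm : ℝ := ∑' l : ℤ, μ ((((j - 1 : ℤ) : ℝ) - (l : ℝ)) * Δx) * midL f μ θ lam Δx ρ l with hLm
    have keyR : |R1 - 2 * R0 + Rm| ≤ Cμ'' * Δx ^ 2 * ∑' l, |midR f μ θ lam Δx ρ l| :=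
      tsum_coeff_sub2 (x := midR f μ θ lam Δx ρ) (C := Cbnd) (K := Cμ'' * Δx ^ 2)
      (c1 := fun l : ℤ => μ ((((j + 1 : ℤ) : ℝ) + 1 - (l : ℝ)) * Δx))
      (c2 := fun l : ℤ => μ (((j : ℝ) + 1 - (l : ℝ)) * Δx))
      (c3 := fun l : ℤ => μ ((((j - 1 : ℤ) : ℝ) + 1 - (l : ℝ)) * Δx))
      hmRs (fun l => hCbnd' _) (fun l => hCbnd' _) (fun l => hCbnd' _) (fun l => by
        have e1 : (((j + 1 : ℤ) : ℝ) + 1 - (l : ℝ)) * Δx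
            = (((j - 1 : ℤ) : ℝ) + 1 - (l : ℝ)) * Δx + 2 * Δx := by push_cast; ring
        have e2 : (((j : ℤ) : ℝ) + 1 - (l : ℝ)) * Δx
            = (((j - 1 : ℤ) : ℝ) + 1 - (l : ℝ)) * Δx + Δx := by push_cast; ring
        rw [e1, e2]
        exact hμ2 ((((j - 1 : ℤ) : ℝ) + 1 - (l : ℝ)) * Δx) Δx)
    have keyL : |L1 - 2 * L0 + Lm| ≤ Cμ'' * Δx ^ 2 * ∑' l, |midL f μ θ lam Δx ρ l| :=
      tsum_coeff_sub2 (x := midL f μ θ lam Δx ρ) (C := Cbnd) (K := Cμ'' * Δx ^ 2)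
      (c1 := fun l : ℤ => μ ((((j + 1 : ℤ) : ℝ) - (l : ℝ)) * Δx))
      (c2 := fun l : ℤ => μ (((j : ℝ) - (l : ℝ)) * Δx))
      (c3 := fun l : ℤ => μ ((((j - 1 : ℤ) : ℝ) - (l : ℝ)) * Δx))
      hmLs (fun l => hCbnd' _) (fun l => hCbnd' _) (fun l => hCbnd' _) (fun l => by
        have e1 : (((j + 1 : ℤ) : ℝ) - (l : ℝ)) * Δx
            = (((j - 1 : ℤ) : ℝ) - (l : ℝ)) * Δx + 2 * Δx := by push_cast; ring
        have e2 : (((j : ℤ) : ℝ) - (l : ℝ)) * Δx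
            = (((j - 1 : ℤ) : ℝ) - (l : ℝ)) * Δx + Δx := by push_cast; ring
        rw [e1, e2]
        exact hμ2 ((((j - 1 : ℤ) : ℝ) - (l : ℝ)) * Δx) Δx)
    clear_value R1 L1 R0 L0 Rm Lm
    have t2 : |R1 - 2 * R0 + Rm| ≤ Cμ'' * Δx ^ 2 * (2 * (1 + lam * L) * P) :=
      keyR.trans (mul_le_mul_of_nonneg_left htsmR (mul_nonneg hCpp0 (sq_nonneg Δx)))
    have t3 : |L1 - 2 * L0 + Lm| ≤ Cμ'' * Δx ^ 2 * (2 * (1 + lam * L) * P) :=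
      keyL.trans (mul_le_mul_of_nonneg_left htsmL (mul_nonneg hCpp0 (sq_nonneg Δx)))
    have t1 : |Δx / 2 * (R1 + L1) - 2 * (Δx / 2 * (R0 + L0)) + Δx / 2 * (Rm + Lm)| ≤
        Δx / 2 * (|R1 - 2 * R0 + Rm| + |L1 - 2 * L0 + Lm|) := by
      rw [show Δx / 2 * (R1 + L1) - 2 * (Δx / 2 * (R0 + L0)) + Δx / 2 * (Rm + Lm)
          = Δx / 2 * ((R1 - 2 * R0 + Rm) + (L1 - 2 * L0 + Lm)) by ring, abs_mul,
        abs_of_nonneg (by linarith : (0:ℝ) ≤ Δx / 2)]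
      exact mul_le_mul_of_nonneg_left (abs_add_le _ _) (by linarith)
    have hCbΔ : Δx / 2 * (Cμ'' * Δx ^ 2 * (2 * (1 + lam * L) * P) +
        Cμ'' * Δx ^ 2 * (2 * (1 + lam * L) * P)) = Cb * Δx ^ 2 := by
      rw [hCbdef, hSdef, hmmm, ← hmassP]; ring
    refine t1.trans (le_trans ?_ (le_of_eq hCbΔ))
    exact mul_le_mul_of_nonneg_left (by linarith) (by linarith)
  have hdρs : Summable (fun j : ℤ => |ρ j - ρ (j - 1)|) := by
    refine (zshift_summable' hTVs 1).congr (fun j => ?_)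
    rw [sub_add_cancel]
  have hdρts : (∑' j : ℤ, |ρ j - ρ (j - 1)|) = T := by
    have e : ∀ j : ℤ, |ρ j - ρ (j - 1)| = (fun k : ℤ => |ρ (k + 1) - ρ k|) (j - 1) := by
      intro j; dsimp only; rw [sub_add_cancel]
    calc (∑' j : ℤ, |ρ j - ρ (j - 1)|)
        = ∑' j : ℤ, (fun k : ℤ => |ρ (k + 1) - ρ k|) (j - 1) := tsum_congr e
    _ = T := by rw [zshift_tsum' (fun k : ℤ => |ρ (k + 1) - ρ k|) 1, hT]
  have hILd : ∀ j, |intL θ ρ j - intL θ ρ (j - 1)| ≤ 2 * |ρ j - ρ (j - 1)| := by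
    intro j
    unfold intL
    have h1 := slp_le_left hθ0 ρ j
    have h2 := slp_le_right hθ0 ρ (j - 1)
    rw [sub_add_cancel] at h2
    have e : ρ j + slp θ ρ j / 2 - (ρ (j - 1) + slp θ ρ (j - 1) / 2)
        = (ρ j - ρ (j - 1)) + (slp θ ρ j - slp θ ρ (j - 1)) / 2 := by ring
    rw [e]
    refine le_trans (abs_add_le _ _) ?_
    have h3 : |(slp θ ρ j - slp θ ρ (j - 1)) / 2| ≤ (|slp θ ρ j| + |slp θ ρ (j - 1)|) / 2 := by
      rw [abs_div, abs_two]
      have := abs_sub (slp θ ρ j) (slp θ ρ (j - 1))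
      linarith
    have h4 := mul_le_mul_of_nonneg_right hθ1 (abs_nonneg (ρ j - ρ (j - 1)))
    linarith
  have hIRd : ∀ j, |intR θ ρ j - intR θ ρ (j - 1)| ≤ 2 * |ρ j - ρ (j - 1)| := by
    intro j
    unfold intR
    have h1 := slp_le_left hθ0 ρ j
    have h2 := slp_le_right hθ0 ρ (j - 1)
    rw [sub_add_cancel] at h2
    have e : ρ j - slp θ ρ j / 2 - (ρ (j - 1) - slp θ ρ (j - 1) / 2)
        = (ρ j - ρ (j - 1)) - (slp θ ρ j - slp θ ρ (j - 1)) / 2 := by ring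
    rw [e]
    refine le_trans (abs_sub _ _) ?_
    have h3 : |(slp θ ρ j - slp θ ρ (j - 1)) / 2| ≤ (|slp θ ρ j| + |slp θ ρ (j - 1)|) / 2 := by
      rw [abs_div, abs_two]
      have := abs_sub (slp θ ρ j) (slp θ ρ (j - 1))
      linarith
    have h4 := mul_le_mul_of_nonneg_right hθ1 (abs_nonneg (ρ j - ρ (j - 1)))
    linarith
  have hΦb : ∀ j : ℤ, |(f (intL θ ρ j) (AdiscL μ θ Δx ρ j) - f (intR θ ρ j) (AdiscR μ θ Δx ρ j)) -
      (f (intL θ ρ (j - 1)) (AdiscL μ θ Δx ρ (j - 1)) -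
        f (intR θ ρ (j - 1)) (AdiscR μ θ Δx ρ (j - 1)))| ≤
      4 * L * |ρ j - ρ (j - 1)| + 2 * M * CC * Δx * bI (j - 1) := by
    intro j
    have pairL : |f (intL θ ρ j) (AdiscL μ θ Δx ρ j) -
        f (intL θ ρ (j - 1)) (AdiscL μ θ Δx ρ (j - 1))| ≤
        2 * L * |ρ j - ρ (j - 1)| + M * CC * Δx * bI (j - 1) := by
      have t1 := lipF1 hf hL (intL θ ρ (j - 1)) (intL θ ρ j) (AdiscL μ θ Δx ρ j)
      have t2 := lipF2 hf hdA (intL θ ρ (j - 1)) (AdiscL μ θ Δx ρ (j - 1)) (AdiscL μ θ Δx ρ j)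
      have e : f (intL θ ρ j) (AdiscL μ θ Δx ρ j) - f (intL θ ρ (j - 1)) (AdiscL μ θ Δx ρ (j - 1))
          = (f (intL θ ρ j) (AdiscL μ θ Δx ρ j) - f (intL θ ρ (j - 1)) (AdiscL μ θ Δx ρ j)) +
            (f (intL θ ρ (j - 1)) (AdiscL μ θ Δx ρ j) -
              f (intL θ ρ (j - 1)) (AdiscL μ θ Δx ρ (j - 1))) := by ring
      rw [e]
      refine le_trans (abs_add_le _ _) ?_
      have b1 : L * |intL θ ρ j - intL θ ρ (j - 1)| ≤ L * (2 * |ρ j - ρ (j - 1)|) :=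
        mul_le_mul_of_nonneg_left (hILd j) hL0
      have b2 : M * |intL θ ρ (j - 1)| * |AdiscL μ θ Δx ρ j - AdiscL μ θ Δx ρ (j - 1)| ≤
          M * bI (j - 1) * (CC * Δx) := by
        have := hALd j
        have hbb := hIL (j - 1)
        have h0 : 0 ≤ M * |intL θ ρ (j - 1)| := mul_nonneg hM.le (abs_nonneg _)
        calc M * |intL θ ρ (j - 1)| * |AdiscL μ θ Δx ρ j - AdiscL μ θ Δx ρ (j - 1)|
            ≤ M * |intL θ ρ (j - 1)| * (CC * Δx) := mul_le_mul_of_nonneg_left this h0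
        _ ≤ M * bI (j - 1) * (CC * Δx) :=
            mul_le_mul_of_nonneg_right (mul_le_mul_of_nonneg_left hbb hM.le)
              (mul_nonneg hCC0 hΔx.le)
      refine le_trans (add_le_add (t1.trans b1) (t2.trans b2)) (le_of_eq (by ring))
    have pairR : |f (intR θ ρ j) (AdiscR μ θ Δx ρ j) -
        f (intR θ ρ (j - 1)) (AdiscR μ θ Δx ρ (j - 1))| ≤
        2 * L * |ρ j - ρ (j - 1)| + M * CC * Δx * bI (j - 1) := by
      have t1 := lipF1 hf hL (intR θ ρ (j - 1)) (intR θ ρ j) (AdiscR μ θ Δx ρ j)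
      have t2 := lipF2 hf hdA (intR θ ρ (j - 1)) (AdiscR μ θ Δx ρ (j - 1)) (AdiscR μ θ Δx ρ j)
      have e : f (intR θ ρ j) (AdiscR μ θ Δx ρ j) - f (intR θ ρ (j - 1)) (AdiscR μ θ Δx ρ (j - 1))
          = (f (intR θ ρ j) (AdiscR μ θ Δx ρ j) - f (intR θ ρ (j - 1)) (AdiscR μ θ Δx ρ j)) +
            (f (intR θ ρ (j - 1)) (AdiscR μ θ Δx ρ j) -
              f (intR θ ρ (j - 1)) (AdiscR μ θ Δx ρ (j - 1))) := by ring
      rw [e]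
      refine le_trans (abs_add_le _ _) ?_
      have b1 : L * |intR θ ρ j - intR θ ρ (j - 1)| ≤ L * (2 * |ρ j - ρ (j - 1)|) :=
        mul_le_mul_of_nonneg_left (hIRd j) hL0
      have b2 : M * |intR θ ρ (j - 1)| * |AdiscR μ θ Δx ρ j - AdiscR μ θ Δx ρ (j - 1)| ≤
          M * bI (j - 1) * (CC * Δx) := by
        have := hARd j
        have hbb := hIR (j - 1)
        have h0 : 0 ≤ M * |intR θ ρ (j - 1)| := mul_nonneg hM.le (abs_nonneg _)
        calc M * |intR θ ρ (j - 1)| * |AdiscR μ θ Δx ρ j - AdiscR μ θ Δx ρ (j - 1)|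
            ≤ M * |intR θ ρ (j - 1)| * (CC * Δx) := mul_le_mul_of_nonneg_left this h0
        _ ≤ M * bI (j - 1) * (CC * Δx) :=
            mul_le_mul_of_nonneg_right (mul_le_mul_of_nonneg_left hbb hM.le)
              (mul_nonneg hCC0 hΔx.le)
      refine le_trans (add_le_add (t1.trans b1) (t2.trans b2)) (le_of_eq (by ring))
    have e2 : (f (intL θ ρ j) (AdiscL μ θ Δx ρ j) - f (intR θ ρ j) (AdiscR μ θ Δx ρ j)) -
        (f (intL θ ρ (j - 1)) (AdiscL μ θ Δx ρ (j - 1)) -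
          f (intR θ ρ (j - 1)) (AdiscR μ θ Δx ρ (j - 1))) =
        (f (intL θ ρ j) (AdiscL μ θ Δx ρ j) -
          f (intL θ ρ (j - 1)) (AdiscL μ θ Δx ρ (j - 1))) -
        (f (intR θ ρ j) (AdiscR μ θ Δx ρ j) -
          f (intR θ ρ (j - 1)) (AdiscR μ θ Δx ρ (j - 1))) := by ring
    rw [e2]
    refine le_trans (abs_sub _ _) ?_
    linarith
  set bD : ℤ → ℝ := fun j => 2 * (1 + lam * L) * |ρ j - ρ (j - 1)| +
      lam * M * CC * Δx * bI (j - 1) with hbDdef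
  have hbD0 : ∀ j, 0 ≤ bD j := by
    intro j
    rw [hbDdef]
    dsimp only
    have h1 : 0 ≤ 2 * (1 + lam * L) * |ρ j - ρ (j - 1)| := by
      refine mul_nonneg (by linarith) (abs_nonneg _)
    have h2 : 0 ≤ lam * M * CC * Δx * bI (j - 1) := by
      refine mul_nonneg (mul_nonneg (mul_nonneg (mul_nonneg hlam.le hM.le) hCC0) hΔx.le)
        (hbI0 _)
    linarith
  have hbDs : Summable bD := by
    rw [hbDdef]
    exact (hdρs.mul_left _).add ((zshift_summable' hbIs 1).mul_left _)
  have hmLd : ∀ j, |midL f μ θ lam Δx ρ j - midL f μ θ lam Δx ρ (j - 1)| ≤ bD j := by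
    intro j
    unfold midL
    have e : intL θ ρ j - lam / 2 * (f (intL θ ρ j) (AdiscL μ θ Δx ρ j) -
          f (intR θ ρ j) (AdiscR μ θ Δx ρ j)) -
        (intL θ ρ (j - 1) - lam / 2 * (f (intL θ ρ (j - 1)) (AdiscL μ θ Δx ρ (j - 1)) -
          f (intR θ ρ (j - 1)) (AdiscR μ θ Δx ρ (j - 1)))) =
        (intL θ ρ j - intL θ ρ (j - 1)) - lam / 2 *
          ((f (intL θ ρ j) (AdiscL μ θ Δx ρ j) - f (intR θ ρ j) (AdiscR μ θ Δx ρ j)) -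
           (f (intL θ ρ (j - 1)) (AdiscL μ θ Δx ρ (j - 1)) -
            f (intR θ ρ (j - 1)) (AdiscR μ θ Δx ρ (j - 1)))) := by ring
    rw [e]
    refine le_trans (abs_sub _ _) ?_
    rw [abs_mul, abs_of_nonneg (by linarith : (0:ℝ) ≤ lam / 2)]
    have h1 := hILd j
    have h2 := mul_le_mul_of_nonneg_left (hΦb j) (by linarith : (0:ℝ) ≤ lam / 2)
    rw [hbDdef]
    dsimp only
    linarith
  have hmRd : ∀ j, |midR f μ θ lam Δx ρ j - midR f μ θ lam Δx ρ (j - 1)| ≤ bD j := by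
    intro j
    unfold midR
    have e : intR θ ρ j - lam / 2 * (f (intL θ ρ j) (AdiscL μ θ Δx ρ j) -
          f (intR θ ρ j) (AdiscR μ θ Δx ρ j)) -
        (intR θ ρ (j - 1) - lam / 2 * (f (intL θ ρ (j - 1)) (AdiscL μ θ Δx ρ (j - 1)) -
          f (intR θ ρ (j - 1)) (AdiscR μ θ Δx ρ (j - 1)))) =
        (intR θ ρ j - intR θ ρ (j - 1)) - lam / 2 *
          ((f (intL θ ρ j) (AdiscL μ θ Δx ρ j) - f (intR θ ρ j) (AdiscR μ θ Δx ρ j)) -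
           (f (intL θ ρ (j - 1)) (AdiscL μ θ Δx ρ (j - 1)) -
            f (intR θ ρ (j - 1)) (AdiscR μ θ Δx ρ (j - 1)))) := by ring
    rw [e]
    refine le_trans (abs_sub _ _) ?_
    rw [abs_mul, abs_of_nonneg (by linarith : (0:ℝ) ≤ lam / 2)]
    have h1 := hIRd j
    have h2 := mul_le_mul_of_nonneg_left (hΦb j) (by linarith : (0:ℝ) ≤ lam / 2)
    rw [hbDdef]
    dsimp only
    linarith
  have htsbD : ∑' j, bD j ≤ 2 * (1 + lam * L) * T + lam * M * CC * Δx * (2 * P) := by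
    rw [hbDdef]
    rw [Summable.tsum_add (hdρs.mul_left _) ((zshift_summable' hbIs 1).mul_left _),
      tsum_mul_left, tsum_mul_left, zshift_tsum' bI 1, hdρts]
    have h1 : lam * M * CC * Δx * ∑' j, bI j ≤ lam * M * CC * Δx * (2 * P) := by
      refine mul_le_mul_of_nonneg_left htsbI ?_
      exact mul_nonneg (mul_nonneg (mul_nonneg hlam.le hM.le) hCC0) hΔx.le
    linarith
  set Q : ℤ → ℝ := fun j => M / 2 * ((2 * Ca ^ 2 + Cb) * Δx ^ 2) * (bM j + bM (j + 1)) +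
      B * Ca * Δx / 2 * (bD j + bD (j + 1)) with hQdef
  have hQs : Summable Q := by
    rw [hQdef]
    exact ((hbMs.add (zshift_summable hbMs 1)).mul_left _).add
      ((hbDs.add (zshift_summable hbDs 1)).mul_left _)
  have hDQ : ∀ j, |Dterm f μ θ α lam Δx ρ j| ≤ Q j := by
    intro j
    have hDeq : Dterm f μ θ α lam Δx ρ j =
        1 / 2 * (((f (midL f μ θ lam Δx ρ j) (Amid f μ θ lam Δx ρ (j + 1)) -
            f (midL f μ θ lam Δx ρ j) (Amid f μ θ lam Δx ρ j)) -
          (f (midL f μ θ lam Δx ρ j) (Amid f μ θ lam Δx ρ j) -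
            f (midL f μ θ lam Δx ρ j) (Amid f μ θ lam Δx ρ (j - 1)))) +
          ((f (midR f μ θ lam Δx ρ (j + 1)) (Amid f μ θ lam Δx ρ (j + 1)) -
            f (midR f μ θ lam Δx ρ (j + 1)) (Amid f μ θ lam Δx ρ j)) -
          (f (midR f μ θ lam Δx ρ (j + 1)) (Amid f μ θ lam Δx ρ j) -
            f (midR f μ θ lam Δx ρ (j + 1)) (Amid f μ θ lam Δx ρ (j - 1))))) +
        1 / 2 * (((f (midL f μ θ lam Δx ρ j) (Amid f μ θ lam Δx ρ j) -
            f (midL f μ θ lam Δx ρ j) (Amid f μ θ lam Δx ρ (j - 1))) -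
          (f (midL f μ θ lam Δx ρ (j - 1)) (Amid f μ θ lam Δx ρ j) -
            f (midL f μ θ lam Δx ρ (j - 1)) (Amid f μ θ lam Δx ρ (j - 1)))) +
          ((f (midR f μ θ lam Δx ρ (j + 1)) (Amid f μ θ lam Δx ρ j) -
            f (midR f μ θ lam Δx ρ (j + 1)) (Amid f μ θ lam Δx ρ (j - 1))) -
          (f (midR f μ θ lam Δx ρ j) (Amid f μ θ lam Δx ρ j) -
            f (midR f μ θ lam Δx ρ j) (Amid f μ θ lam Δx ρ (j - 1))))) := by
      unfold Dterm numFlux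
      ring
    have kXu := key1 hf hdA hdAA (midL f μ θ lam Δx ρ j) (Amid f μ θ lam Δx ρ (j - 1))
      (Amid f μ θ lam Δx ρ j) (Amid f μ θ lam Δx ρ (j + 1))
    have kXv := key1 hf hdA hdAA (midR f μ θ lam Δx ρ (j + 1)) (Amid f μ θ lam Δx ρ (j - 1))
      (Amid f μ θ lam Δx ρ j) (Amid f μ θ lam Δx ρ (j + 1))
    have kYu := key2 hf hBρA (midL f μ θ lam Δx ρ j) (midL f μ θ lam Δx ρ (j - 1))
      (Amid f μ θ lam Δx ρ (j - 1)) (Amid f μ θ lam Δx ρ j)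
    have kYv := key2 hf hBρA (midR f μ θ lam Δx ρ (j + 1)) (midR f μ θ lam Δx ρ j)
      (Amid f μ θ lam Δx ρ (j - 1)) (Amid f μ θ lam Δx ρ j)
    have hp : |Amid f μ θ lam Δx ρ (j + 1) - Amid f μ θ lam Δx ρ j| ≤ Ca * Δx := hAMd j
    have hm : |Amid f μ θ lam Δx ρ j - Amid f μ θ lam Δx ρ (j - 1)| ≤ Ca * Δx := hAMd' j
    have hm2 : |Amid f μ θ lam Δx ρ (j - 1) - Amid f μ θ lam Δx ρ j| ≤ Ca * Δx := by
      rw [abs_sub_comm]; exact hm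
    have hdd : |Amid f μ θ lam Δx ρ (j + 1) - 2 * Amid f μ θ lam Δx ρ j +
        Amid f μ θ lam Δx ρ (j - 1)| ≤ Cb * Δx ^ 2 := hAM2 j
    have hsq1 : (Amid f μ θ lam Δx ρ (j + 1) - Amid f μ θ lam Δx ρ j) ^ 2 ≤ (Ca * Δx) ^ 2 := by
      rw [← sq_abs]; exact pow_le_pow_left₀ (abs_nonneg _) hp 2
    have hsq2 : (Amid f μ θ lam Δx ρ (j - 1) - Amid f μ θ lam Δx ρ j) ^ 2 ≤ (Ca * Δx) ^ 2 := by
      rw [← sq_abs]; exact pow_le_pow_left₀ (abs_nonneg _) hm2 2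
    have hinner : (Amid f μ θ lam Δx ρ (j + 1) - Amid f μ θ lam Δx ρ j) ^ 2 +
        (Amid f μ θ lam Δx ρ (j - 1) - Amid f μ θ lam Δx ρ j) ^ 2 +
        |Amid f μ θ lam Δx ρ (j + 1) - 2 * Amid f μ θ lam Δx ρ j +
          Amid f μ θ lam Δx ρ (j - 1)| ≤ (2 * Ca ^ 2 + Cb) * Δx ^ 2 := by
      linarith [hsq1, hsq2, hdd]
    have hinn0 : 0 ≤ (Amid f μ θ lam Δx ρ (j + 1) - Amid f μ θ lam Δx ρ j) ^ 2 +
        (Amid f μ θ lam Δx ρ (j - 1) - Amid f μ θ lam Δx ρ j) ^ 2 +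
        |Amid f μ θ lam Δx ρ (j + 1) - 2 * Amid f μ θ lam Δx ρ j +
          Amid f μ θ lam Δx ρ (j - 1)| := by positivity
    have hXu : |(f (midL f μ θ lam Δx ρ j) (Amid f μ θ lam Δx ρ (j + 1)) -
          f (midL f μ θ lam Δx ρ j) (Amid f μ θ lam Δx ρ j)) -
        (f (midL f μ θ lam Δx ρ j) (Amid f μ θ lam Δx ρ j) -
          f (midL f μ θ lam Δx ρ j) (Amid f μ θ lam Δx ρ (j - 1)))| ≤
        M * bM j * ((2 * Ca ^ 2 + Cb) * Δx ^ 2) := by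
      refine kXu.trans ?_
      exact mul_le_mul (mul_le_mul_of_nonneg_left (hmLb j) hM.le) hinner hinn0
        (mul_nonneg hM.le (hbM0 j))
    have hXv : |(f (midR f μ θ lam Δx ρ (j + 1)) (Amid f μ θ lam Δx ρ (j + 1)) -
          f (midR f μ θ lam Δx ρ (j + 1)) (Amid f μ θ lam Δx ρ j)) -
        (f (midR f μ θ lam Δx ρ (j + 1)) (Amid f μ θ lam Δx ρ j) -
          f (midR f μ θ lam Δx ρ (j + 1)) (Amid f μ θ lam Δx ρ (j - 1)))| ≤
        M * bM (j + 1) * ((2 * Ca ^ 2 + Cb) * Δx ^ 2) := by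
      refine kXv.trans ?_
      exact mul_le_mul (mul_le_mul_of_nonneg_left (hmRb (j + 1)) hM.le) hinner hinn0
        (mul_nonneg hM.le (hbM0 (j + 1)))
    have hvd : |midR f μ θ lam Δx ρ (j + 1) - midR f μ θ lam Δx ρ j| ≤ bD (j + 1) := by
      have h := hmRd (j + 1)
      rwa [add_sub_cancel_right] at h
    have hYu : |(f (midL f μ θ lam Δx ρ j) (Amid f μ θ lam Δx ρ j) -
          f (midL f μ θ lam Δx ρ j) (Amid f μ θ lam Δx ρ (j - 1))) -
        (f (midL f μ θ lam Δx ρ (j - 1)) (Amid f μ θ lam Δx ρ j) -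
          f (midL f μ θ lam Δx ρ (j - 1)) (Amid f μ θ lam Δx ρ (j - 1)))| ≤
        B * bD j * (Ca * Δx) := by
      refine kYu.trans ?_
      exact mul_le_mul (mul_le_mul_of_nonneg_left (hmLd j) hB0) hm (abs_nonneg _)
        (mul_nonneg hB0 (hbD0 j))
    have hYv : |(f (midR f μ θ lam Δx ρ (j + 1)) (Amid f μ θ lam Δx ρ j) -
          f (midR f μ θ lam Δx ρ (j + 1)) (Amid f μ θ lam Δx ρ (j - 1))) -
        (f (midR f μ θ lam Δx ρ j) (Amid f μ θ lam Δx ρ j) -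
          f (midR f μ θ lam Δx ρ j) (Amid f μ θ lam Δx ρ (j - 1)))| ≤
        B * bD (j + 1) * (Ca * Δx) := by
      refine kYv.trans ?_
      exact mul_le_mul (mul_le_mul_of_nonneg_left hvd hB0) hm (abs_nonneg _)
        (mul_nonneg hB0 (hbD0 (j + 1)))
    rw [hDeq]
    refine le_trans (abs_add_le _ _) ?_
    rw [abs_mul, abs_mul, abs_of_nonneg (by norm_num : (0:ℝ) ≤ 1 / 2)]
    have tr1 := abs_add_le (f (midL f μ θ lam Δx ρ j) (Amid f μ θ lam Δx ρ (j + 1)) -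
            f (midL f μ θ lam Δx ρ j) (Amid f μ θ lam Δx ρ j) -
          (f (midL f μ θ lam Δx ρ j) (Amid f μ θ lam Δx ρ j) -
            f (midL f μ θ lam Δx ρ j) (Amid f μ θ lam Δx ρ (j - 1))))
        (f (midR f μ θ lam Δx ρ (j + 1)) (Amid f μ θ lam Δx ρ (j + 1)) -
            f (midR f μ θ lam Δx ρ (j + 1)) (Amid f μ θ lam Δx ρ j) -
          (f (midR f μ θ lam Δx ρ (j + 1)) (Amid f μ θ lam Δx ρ j) -
            f (midR f μ θ lam Δx ρ (j + 1)) (Amid f μ θ lam Δx ρ (j - 1))))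
    have tr2 := abs_add_le (f (midL f μ θ lam Δx ρ j) (Amid f μ θ lam Δx ρ j) -
            f (midL f μ θ lam Δx ρ j) (Amid f μ θ lam Δx ρ (j - 1)) -
          (f (midL f μ θ lam Δx ρ (j - 1)) (Amid f μ θ lam Δx ρ j) -
            f (midL f μ θ lam Δx ρ (j - 1)) (Amid f μ θ lam Δx ρ (j - 1))))
        (f (midR f μ θ lam Δx ρ (j + 1)) (Amid f μ θ lam Δx ρ j) -
            f (midR f μ θ lam Δx ρ (j + 1)) (Amid f μ θ lam Δx ρ (j - 1)) -
          (f (midR f μ θ lam Δx ρ j) (Amid f μ θ lam Δx ρ j) -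
            f (midR f μ θ lam Δx ρ j) (Amid f μ θ lam Δx ρ (j - 1))))
    have final_eq : 1 / 2 * (M * bM j * ((2 * Ca ^ 2 + Cb) * Δx ^ 2) +
        M * bM (j + 1) * ((2 * Ca ^ 2 + Cb) * Δx ^ 2)) +
        1 / 2 * (B * bD j * (Ca * Δx) + B * bD (j + 1) * (Ca * Δx)) = Q j := by
      rw [hQdef]; dsimp only; ring
    refine le_trans (add_le_add
      (mul_le_mul_of_nonneg_left (tr1.trans (add_le_add hXu hXv))
        (by norm_num : (0:ℝ) ≤ 1 / 2))
      (mul_le_mul_of_nonneg_left (tr2.trans (add_le_add hYu hYv))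
        (by norm_num : (0:ℝ) ≤ 1 / 2))) (le_of_eq final_eq)
  have hDsum : ∑' j, |Dterm f μ θ α lam Δx ρ j| ≤ ∑' j, Q j := tsum_abs_le hQs hDQ
  have hQsum : ∑' j, Q j = M / 2 * ((2 * Ca ^ 2 + Cb) * Δx ^ 2) * (2 * ∑' j, bM j) +
      B * Ca * Δx / 2 * (2 * ∑' j, bD j) := by
    rw [hQdef]
    rw [Summable.tsum_add ((hbMs.add (zshift_summable hbMs 1)).mul_left _)
        ((hbDs.add (zshift_summable hbDs 1)).mul_left _),
      tsum_mul_left, tsum_mul_left, Summable.tsum_add hbMs (zshift_summable hbMs 1),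
      Summable.tsum_add hbDs (zshift_summable hbDs 1), zshift_tsum bM 1, zshift_tsum bD 1]
    ring
  have c1 : 0 ≤ M / 2 * ((2 * Ca ^ 2 + Cb) * Δx ^ 2) := by
    have h1 : 0 ≤ 2 * Ca ^ 2 + Cb := by linarith [sq_nonneg Ca, hCb0]
    have h2 : 0 ≤ (2 * Ca ^ 2 + Cb) * Δx ^ 2 := mul_nonneg h1 (sq_nonneg Δx)
    have h3 : 0 ≤ M / 2 := by linarith [hM.le]
    exact mul_nonneg h3 h2
  have c2 : 0 ≤ B * Ca * Δx / 2 := by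
    have := mul_nonneg (mul_nonneg hB0 hCa0) hΔx.le
    linarith
  calc lam * ∑' j, |Dterm f μ θ α lam Δx ρ j| ≤ lam * ∑' j, Q j :=
        mul_le_mul_of_nonneg_left hDsum hlam.le
  _ = lam * (M / 2 * ((2 * Ca ^ 2 + Cb) * Δx ^ 2) * (2 * ∑' j, bM j) +
      B * Ca * Δx / 2 * (2 * ∑' j, bD j)) := by rw [hQsum]
  _ ≤ lam * (M / 2 * ((2 * Ca ^ 2 + Cb) * Δx ^ 2) * (2 * (2 * (1 + lam * L) * P)) +
      B * Ca * Δx / 2 * (2 * (2 * (1 + lam * L) * T + lam * M * CC * Δx * (2 * P)))) := by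
      refine mul_le_mul_of_nonneg_left ?_ hlam.le
      have m1 : 2 * ∑' j, bM j ≤ 2 * (2 * (1 + lam * L) * P) := by linarith [htsbM]
      have m2 : 2 * ∑' j, bD j ≤ 2 * (2 * (1 + lam * L) * T + lam * M * CC * Δx * (2 * P)) := by
        linarith [htsbD]
      exact add_le_add (mul_le_mul_of_nonneg_left m1 c1) (mul_le_mul_of_nonneg_left m2 c2)
  _ = Δt * (M * S / 2 * (2 * Ca ^ 2 + Cb) + 2 * B * Ca * lam * M * CC * mm) +
      Δt * (2 * B * Ca * (1 + lam * L)) * T := by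
      rw [hSdef, hmmm, ← hmassP, ← hlamΔ]
      ring
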